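/- arXiv:1902.05612 — 5 statements merged into one kernel-verified Lean document; each statement's English description precedes it below -/
import Mathlib

section
/- Under the rotation-invariant sub-Gaussian measurement model with measurements yᵢ = x* Aᵢ x for a fixed x ∈ ℂⁿ, the matrix S = (1/m)·Σ_{i=1}^m ȳᵢ·Aᵢ satisfies E[S] = 2·x x* (entrywise expectation). -/
open MeasureTheory ProbabilityTheory Matrix Complex Finset

noncomputable section

/-- The vector in `ℝ^{2n²}` of real and imaginary parts of the entries of a complex matrix. -/
def coeffVec {n : ℕ} (A : Matrix (Fin n) (Fin n) ℂ) : Fin n × Fin n × Fin 2 → ℝ :=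
  fun p => if p.2.2 = (0 : Fin 2) then (A p.1 p.2.1).re else (A p.1 p.2.1).im

/-- A real random variable is sub-Gaussian: its tails are dominated by a Gaussian tail. -/
def IsSubGaussianRV {Ω : Type} [MeasureSpace Ω] (X : Ω → ℝ) : Prop :=
  ∃ K > 0, ∀ t : ℝ, 0 ≤ t →
    (ℙ {ω | t ≤ |X ω|}).toReal ≤ 2 * Real.exp (-(t ^ 2) / K ^ 2)

/-- The rotation-invariant sub-Gaussian measurement model: the matrices `A i` are i.i.d.,
the vector of real/imaginary parts of the entries has a rotation-invariant distribution,
all one-dimensional marginals are sub-Gaussian, and each coordinate has unit variance. -/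
structure RotInvSubGaussian {Ω : Type} [MeasureSpace Ω] {n m : ℕ}
    (A : Fin m → Ω → Matrix (Fin n) (Fin n) ℂ) : Prop where
  prob : IsProbabilityMeasure (ℙ : Measure Ω)
  meas : ∀ i, Measurable fun ω => coeffVec (A i ω)
  indep : iIndepFun (fun i ω => coeffVec (A i ω)) ℙ
  ident : ∀ i j, Measure.map (fun ω => coeffVec (A i ω)) ℙ
    = Measure.map (fun ω => coeffVec (A j ω)) ℙ
  rotInv : ∀ (i : Fin m) (O : Matrix (Fin n × Fin n × Fin 2) (Fin n × Fin n × Fin 2) ℝ),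
    Oᵀ * O = 1 →
    Measure.map (fun ω => O.mulVec (coeffVec (A i ω))) ℙ
      = Measure.map (fun ω => coeffVec (A i ω)) ℙ
  subGaussian : ∀ (i : Fin m) (g : Fin n × Fin n × Fin 2 → ℝ),
    IsSubGaussianRV (fun ω => g ⬝ᵥ coeffVec (A i ω))
  unitVar : ∀ (i : Fin m) (k : Fin n × Fin n × Fin 2), ∫ ω, (coeffVec (A i ω) k) ^ 2 = 1

/-- A matrix acting on `EuclideanSpace`. -/
def mApp {n : ℕ} (M : Matrix (Fin n) (Fin n) ℂ) (v : EuclideanSpace ℂ (Fin n)) :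
    EuclideanSpace ℂ (Fin n) :=
  Matrix.toEuclideanLin M v

/-- `quadForm M u v = u* M v`. -/
def quadForm {n : ℕ} (M : Matrix (Fin n) (Fin n) ℂ) (u v : EuclideanSpace ℂ (Fin n)) : ℂ :=
  inner ℂ u (mApp M v)

/-- The spectral (operator) norm of a complex matrix. -/
def specNorm {n : ℕ} (M : Matrix (Fin n) (Fin n) ℂ) : ℝ :=
  ‖LinearMap.toContinuousLinearMap (Matrix.toEuclideanLin M)‖

/-- The outer product `q p*`. -/
def outer {n : ℕ} (q p : EuclideanSpace ℂ (Fin n)) : Matrix (Fin n) (Fin n) ℂ :=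
  Matrix.vecMulVec (fun r => q r) (fun c => starRingEnd ℂ (p c))

/-- `(1/m) Σᵢ (p* Aᵢ* q) Aᵢ − 2 q p*`. -/
def Gmat {n m : ℕ} (A : Fin m → Matrix (Fin n) (Fin n) ℂ)
    (p q : EuclideanSpace ℂ (Fin n)) : Matrix (Fin n) (Fin n) ℂ :=
  (m : ℂ)⁻¹ • (∑ i, quadForm (A i)ᴴ p q • A i) - (2 : ℂ) • outer q p

/-- Squared distance up to a global phase. -/
def distSq {n : ℕ} (z x : EuclideanSpace ℂ (Fin n)) : ℝ :=
  ‖z‖ ^ 2 + ‖x‖ ^ 2 - 2 * ‖(inner ℂ z x : ℂ)‖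

/-- The Wirtinger flow gradient of the loss `f(z) = (1/m) Σᵢ |z* Aᵢ z − x* Aᵢ x|²`. -/
def wfGrad {n m : ℕ} (A : Fin m → Matrix (Fin n) (Fin n) ℂ)
    (x z : EuclideanSpace ℂ (Fin n)) : EuclideanSpace ℂ (Fin n) :=
  (m : ℂ)⁻¹ • ∑ i,
    ((quadForm (A i)ᴴ z z - quadForm (A i)ᴴ x x) • mApp (A i) z
      + (quadForm (A i) z z - quadForm (A i) x x) • mApp (A i)ᴴ z)

/-- The spectral initialization matrix `S = (1/m) Σᵢ ȳᵢ Aᵢ` with `yᵢ = x* Aᵢ x`. -/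
def Smat {n m : ℕ} (A : Fin m → Matrix (Fin n) (Fin n) ℂ)
    (x : EuclideanSpace ℂ (Fin n)) : Matrix (Fin n) (Fin n) ℂ :=
  (m : ℂ)⁻¹ • ∑ i, starRingEnd ℂ (quadForm (A i) x x) • A i

/-- `v` is a unit right singular vector of `S` associated with the largest singular value
(which equals the spectral norm). -/
def TopRightSingVec {n : ℕ} (S : Matrix (Fin n) (Fin n) ℂ)
    (v : EuclideanSpace ℂ (Fin n)) : Prop :=
  ‖v‖ = 1 ∧ ∃ u : EuclideanSpace ℂ (Fin n), ‖u‖ = 1 ∧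
    mApp S v = (specNorm S : ℂ) • u ∧ mApp Sᴴ u = (specNorm S : ℂ) • v

end

section Aux

open MeasureTheory ProbabilityTheory Matrix

lemma measurable_mulVec' {ι : Type*} [Fintype ι] (O : Matrix ι ι ℝ) :
    Measurable fun v : ι → ℝ => O.mulVec v := by
  refine measurable_pi_iff.2 fun i => ?_
  simpa [Matrix.mulVec, dotProduct] using
    Finset.measurable_sum Finset.univ fun j _ => (measurable_const (a := O i j)).mul (measurable_pi_apply j)

lemma second_moment {Ω : Type} [MeasureSpace Ω] [IsProbabilityMeasure (ℙ : Measure Ω)]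
    {ι : Type*} [Fintype ι] [DecidableEq ι]
    (f : Ω → ι → ℝ) (hf : Measurable f)
    (hrot : ∀ O : Matrix ι ι ℝ, Oᵀ * O = 1 →
      Measure.map (fun ω => O.mulVec (f ω)) (ℙ : Measure Ω) = Measure.map f (ℙ : Measure Ω))
    (hvar : ∀ k, ∫ ω, (f ω k) ^ 2 = 1) (k l : ι) :
    Integrable (fun ω => f ω k * f ω l) ∧
      ∫ ω, f ω k * f ω l = if k = l then 1 else 0 := by
  have hmk : ∀ k, Measurable fun ω => f ω k := fun k => (measurable_pi_apply k).comp hf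
  have hsq : ∀ k, Integrable (fun ω => f ω k ^ 2) := by
    intro k
    by_contra h
    have := hvar k
    rw [integral_undef h] at this; norm_num at this
  have hint : Integrable (fun ω => f ω k * f ω l) := by
    refine (((hsq k).add (hsq l)).div_const 2).mono
      ((hmk k).mul (hmk l)).aestronglyMeasurable (ae_of_all _ fun ω => ?_)
    simp only [Real.norm_eq_abs, abs_mul, Pi.add_apply]
    refine le_trans ?_ (le_abs_self _)
    nlinarith [sq_nonneg (|f ω k| - |f ω l|), _root_.sq_abs (f ω k), _root_.sq_abs (f ω l),
      abs_nonneg (f ω k), abs_nonneg (f ω l)]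
  refine ⟨hint, ?_⟩
  by_cases hkl : k = l
  · subst hkl; simp only [if_pos rfl]; simpa [sq] using hvar k
  · simp only [if_neg hkl]
    set O : Matrix ι ι ℝ := Matrix.diagonal (fun p => if p = k then (-1 : ℝ) else 1) with hOdef
    have hO : Oᵀ * O = 1 := by
      rw [hOdef, Matrix.diagonal_transpose, Matrix.diagonal_mul_diagonal]
      have he : (fun p => (if p = k then (-1:ℝ) else 1) * (if p = k then (-1:ℝ) else 1))
          = fun _ => 1 := by
        funext p; by_cases hp : p = k <;> simp [hp]
      rw [he, Matrix.diagonal_one]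
    have hmap := hrot O hO
    have hmeasT : Measurable fun ω => O.mulVec (f ω) := (measurable_mulVec' O).comp hf
    have hg : Measurable fun v : ι → ℝ => v k * v l :=
      (measurable_pi_apply k).mul (measurable_pi_apply l)
    have h1 : ∫ ω, (O.mulVec (f ω)) k * (O.mulVec (f ω)) l = ∫ ω, f ω k * f ω l := by
      rw [← integral_map hmeasT.aemeasurable hg.aestronglyMeasurable,
          ← integral_map hf.aemeasurable hg.aestronglyMeasurable, hmap]
    have h2 : ∀ ω, (O.mulVec (f ω)) k * (O.mulVec (f ω)) l = -(f ω k * f ω l) := by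
      intro ω
      have e1 : O.mulVec (f ω) k = -(f ω k) := by
        simp [hOdef, Matrix.mulVec_diagonal]
      have e2 : O.mulVec (f ω) l = f ω l := by
        simp [hOdef, Matrix.mulVec_diagonal, Ne.symm hkl]
      rw [e1, e2]; ring
    simp_rw [h2, integral_neg] at h1
    linarith

lemma integral_cplx_ofReal {α : Type*} [MeasurableSpace α] {μ : Measure α} (g : α → ℝ) :
    ∫ x, ((g x : ℝ) : ℂ) ∂μ = ((∫ x, g x ∂μ : ℝ) : ℂ) :=
  integral_ofReal

lemma conj_mul_decomp (z w : ℂ) : (starRingEnd ℂ) z * w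
    = ((z.re * w.re + z.im * w.im : ℝ) : ℂ)
      + ((z.re * w.im - z.im * w.re : ℝ) : ℂ) * Complex.I := by
  apply Complex.ext <;>
    simp [Complex.mul_re, Complex.mul_im, Complex.add_re, Complex.add_im] <;> ring

end Aux

/-- Under the rotation-invariant sub-Gaussian measurement model with `yᵢ = x* Aᵢ x`,
the matrix `S = (1/m) Σᵢ ȳᵢ Aᵢ` satisfies `E[S] = 2 x x*` entrywise. -/
theorem expectation_S_eq :
    ∀ (n m : ℕ) (Ω : Type) [MeasureSpace Ω]
      (A : Fin m → Ω → Matrix (Fin n) (Fin n) ℂ) (x : EuclideanSpace ℂ (Fin n)),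
      RotInvSubGaussian A → 0 < m →
      ∀ r c : Fin n,
        ∫ ω, Smat (fun i => A i ω) x r c = 2 * (x r * starRingEnd ℂ (x c)) := by
  intro n m Ω _ A x h hm r c
  haveI := h.prob
  set f : Fin m → Ω → (Fin n × Fin n × Fin 2 → ℝ) := fun i ω => coeffVec (A i ω) with hfdef
  have key : ∀ i k l, Integrable (fun ω => f i ω k * f i ω l) ∧
      ∫ ω, f i ω k * f i ω l = if k = l then 1 else 0 :=
    fun i k l => second_moment (f i) (h.meas i) (h.rotInv i) (h.unitVar i) k l
  have hre : ∀ i ω (a b : Fin n), ((A i ω) a b).re = f i ω (a, b, 0) := by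
    intro i ω a b; simp [hfdef, coeffVec]
  have him : ∀ i ω (a b : Fin n), ((A i ω) a b).im = f i ω (a, b, 1) := by
    intro i ω a b; simp [hfdef, coeffVec, show (1 : Fin 2) ≠ 0 by decide]
  -- integrability and moments of conjugate-entry products
  have hintc : ∀ i (a b : Fin n),
      Integrable (fun ω => (starRingEnd ℂ) ((A i ω) a b) * (A i ω) r c) := by
    intro i a b
    simp_rw [conj_mul_decomp, hre, him]
    exact (((key i _ _).1.add (key i _ _).1).ofReal).add
      ((((key i _ _).1.sub (key i _ _).1).ofReal).mul_const _)
  have hmomc : ∀ i (a b : Fin n),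
      ∫ ω, (starRingEnd ℂ) ((A i ω) a b) * (A i ω) r c
        = if a = r ∧ b = c then 2 else 0 := by
    intro i a b
    simp_rw [conj_mul_decomp, hre, him]
    have i1 : Integrable (fun ω =>
        ((f i ω (a,b,0) * f i ω (r,c,0) + f i ω (a,b,1) * f i ω (r,c,1) : ℝ) : ℂ)) :=
      ((key i (a,b,0) (r,c,0)).1.add (key i (a,b,1) (r,c,1)).1).ofReal
    have i2 : Integrable (fun ω =>
        ((f i ω (a,b,0) * f i ω (r,c,1) - f i ω (a,b,1) * f i ω (r,c,0) : ℝ) : ℂ)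
          * Complex.I) :=
      (((key i (a,b,0) (r,c,1)).1.sub (key i (a,b,1) (r,c,0)).1).ofReal).mul_const _
    rw [integral_add i1 i2, integral_mul_const, integral_cplx_ofReal, integral_cplx_ofReal,
      integral_add (key i (a,b,0) (r,c,0)).1 (key i (a,b,1) (r,c,1)).1,
      integral_sub (key i (a,b,0) (r,c,1)).1 (key i (a,b,1) (r,c,0)).1,
      (key i (a,b,0) (r,c,0)).2, (key i (a,b,1) (r,c,1)).2,
      (key i (a,b,0) (r,c,1)).2, (key i (a,b,1) (r,c,0)).2]
    simp only [Prod.mk.injEq, show ((0:Fin 2) = 1) ↔ False from by decide,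
      show ((1:Fin 2) = 0) ↔ False from by decide, and_false, if_false, and_true]
    by_cases hab : a = r ∧ b = c
    · simp [hab.1, hab.2]; norm_num
    · simp [hab]
  -- quadratic form expansion
  have hq : ∀ i ω, (starRingEnd ℂ) (quadForm (A i ω) x x) * (A i ω) r c
      = ∑ a, ∑ b, (x a * starRingEnd ℂ (x b))
          * ((starRingEnd ℂ) ((A i ω) a b) * (A i ω) r c) := by
    intro i ω
    have hqf : quadForm (A i ω) x x
        = ∑ a, ∑ b, starRingEnd ℂ (x a) * ((A i ω) a b * x b) := by
      simp [quadForm, mApp, PiLp.inner_apply, RCLike.inner_apply,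
        Matrix.toEuclideanLin_apply, Matrix.mulVec, dotProduct, Finset.mul_sum]
      refine Finset.sum_congr rfl fun a _ => ?_
      rw [Finset.sum_mul]
      exact Finset.sum_congr rfl fun b _ => by ring
    rw [hqf, map_sum, Finset.sum_mul]
    refine Finset.sum_congr rfl fun a _ => ?_
    rw [map_sum, Finset.sum_mul]
    refine Finset.sum_congr rfl fun b _ => ?_
    simp only [_root_.map_mul, Complex.conj_conj]
    ring
  -- Smat entry expansion
  have hS : ∀ ω, Smat (fun i => A i ω) x r c
      = (m : ℂ)⁻¹ * ∑ i, (starRingEnd ℂ) (quadForm (A i ω) x x) * ((A i ω) r c) := by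
    intro ω
    simp [Smat, Matrix.smul_apply, Matrix.sum_apply, smul_eq_mul, Finset.mul_sum]
  simp_rw [hS, hq]
  rw [integral_const_mul, integral_finset_sum _ fun i _ => integrable_finset_sum _ fun a _ =>
    integrable_finset_sum _ fun b _ => ((hintc i a b).const_mul _)]
  have hsum : ∀ i : Fin m,
      (∫ ω, ∑ a, ∑ b, (x a * starRingEnd ℂ (x b))
        * ((starRingEnd ℂ) ((A i ω) a b) * (A i ω) r c))
      = 2 * (x r * starRingEnd ℂ (x c)) := by
    intro i
    rw [integral_finset_sum _ fun a _ => integrable_finset_sum _ fun b _ =>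
      ((hintc i a b).const_mul _)]
    have : ∀ a : Fin n, (∫ ω, ∑ b, (x a * starRingEnd ℂ (x b))
        * ((starRingEnd ℂ) ((A i ω) a b) * (A i ω) r c))
        = ∑ b, (x a * starRingEnd ℂ (x b)) * (if a = r ∧ b = c then 2 else 0) := by
      intro a
      rw [integral_finset_sum _ fun b _ => ((hintc i a b).const_mul _)]
      exact Finset.sum_congr rfl fun b _ => by rw [integral_const_mul, hmomc]
    simp_rw [this]
    simp [ite_and, mul_ite, mul_zero, Finset.sum_ite_eq', Finset.mem_univ]
    ring
  simp_rw [hsum]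
  rw [Finset.sum_const, Finset.card_univ, Fintype.card_fin, nsmul_eq_mul]
  rw [← mul_assoc, inv_mul_cancel₀ (by exact_mod_cast hm.ne' : (m:ℂ) ≠ 0), one_mul]
end

section
/- Under the rotation-invariant sub-Gaussian measurement model with measurements yᵢ = x* Aᵢ x for a fixed x ∈ ℂⁿ, the expectation of the norm estimator satisfies E[(1/(2m))·Σ_{i=1}^m ȳᵢ yᵢ] = ‖x‖₂⁴. -/
open MeasureTheory ProbabilityTheory Matrix Complex Finset

section Aux
open MeasureTheory ProbabilityTheory Matrix Finset

private lemma sq_int_of_one' {Ω : Type} [MeasureSpace Ω] (f : Ω → ℝ)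
    (h : ∫ ω, f ω ^ 2 = 1) : Integrable (fun ω => f ω ^ 2) := by
  by_contra hn
  rw [integral_undef hn] at h; norm_num at h

private lemma exists_rot' {ι : Type} [Fintype ι] [DecidableEq ι] (g : ι → ℝ) (k0 : ι)
    (hg : g k0 ≠ 0) :
    ∃ O : Matrix ι ι ℝ, Oᵀ * O = 1 ∧ ∀ r : ι → ℝ,
      g ⬝ᵥ O.mulVec r = ‖(WithLp.equiv 2 (ι → ℝ)).symm g‖ * r k0 := by
  set gE : EuclideanSpace ℝ ι := (WithLp.equiv 2 (ι → ℝ)).symm g with hgE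
  have hgE0 : gE ≠ 0 := by
    intro h0; apply hg
    have := congrFun (congrArg (WithLp.equiv 2 (ι → ℝ)) h0) k0
    simpa [hgE] using this
  have hng : ‖gE‖ ≠ 0 := norm_ne_zero_iff.mpr hgE0
  set u : EuclideanSpace ℝ ι := ‖gE‖⁻¹ • gE with hu
  have hnu : ‖u‖ = 1 := by
    rw [hu, norm_smul]; simp [_root_.abs_of_nonneg (inv_nonneg.mpr (norm_nonneg gE)), inv_mul_cancel₀ hng]
  have horth : Orthonormal ℝ (({k0} : Set ι).restrict (fun _ => u)) := by
    constructor
    · intro i; exact hnu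
    · intro i j hij; exact absurd (Subsingleton.elim i j) hij
  obtain ⟨b, hb⟩ := horth.exists_orthonormalBasis_extension_of_card_eq
    (by simp [finrank_euclideanSpace])
  have hbk0 : b k0 = u := hb k0 rfl
  refine ⟨Matrix.of (fun k l => b l k), ?_, ?_⟩
  · ext l l'
    simp only [Matrix.mul_apply, Matrix.transpose_apply, Matrix.of_apply, Matrix.one_apply]
    have := orthonormal_iff_ite.mp b.orthonormal l l'
    rw [PiLp.inner_apply] at this
    simpa [RCLike.inner_apply, mul_comm] using this
  · intro r
    rw [Matrix.dotProduct_mulVec]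
    have hvm : ∀ l, (Matrix.vecMul g (Matrix.of (fun k l => b l k))) l
        = if l = k0 then ‖gE‖ else 0 := by
      intro l
      have h1 : (Matrix.vecMul g (Matrix.of (fun k l => b l k))) l = inner ℝ (b l) gE := by
        rw [PiLp.inner_apply]
        simp [Matrix.vecMul, dotProduct, RCLike.inner_apply, mul_comm, hgE]
      rw [h1]
      have hgu : gE = ‖gE‖ • u := by rw [hu, smul_smul, mul_inv_cancel₀ hng, one_smul]
      rw [hgu, inner_smul_right, ← hbk0]
      have := orthonormal_iff_ite.mp b.orthonormal l k0
      rw [this]; rw [hbk0]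
      split <;> simp [norm_smul, hnu]
    have h2 : ∀ l, (Matrix.vecMul g (Matrix.of fun k l => b l k)) l * r l
        = (if l = k0 then ‖gE‖ * r l else 0) := by
      intro l; rw [hvm l]; split <;> simp
    rw [dotProduct]
    rw [Finset.sum_congr rfl (fun l _ => h2 l)]
    simp

private lemma dot_sq' {Ω : Type} [MeasureSpace Ω] {ι : Type} [Fintype ι] [DecidableEq ι]
    (φ : Ω → ι → ℝ) (hφ : Measurable φ)
    (hrot : ∀ O : Matrix ι ι ℝ, Oᵀ * O = 1 →
      Measure.map (fun ω => O.mulVec (φ ω)) (ℙ : Measure Ω) = Measure.map φ (ℙ : Measure Ω))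
    (hvar : ∀ k, ∫ ω, (φ ω k) ^ 2 = 1)
    (g : ι → ℝ) :
    Integrable (fun ω => (g ⬝ᵥ φ ω) ^ 2) ∧ ∫ ω, (g ⬝ᵥ φ ω) ^ 2 = ∑ p, g p ^ 2 := by
  by_cases hg0 : g = 0
  · subst hg0; simp [dotProduct]
  · obtain ⟨k0, hk0⟩ := Function.ne_iff.mp hg0
    obtain ⟨O, hO, hOvec⟩ := exists_rot' g k0 hk0
    set gE : EuclideanSpace ℝ ι := (WithLp.equiv 2 (ι → ℝ)).symm g with hgE
    have hF : Continuous (fun v : ι → ℝ => (g ⬝ᵥ v) ^ 2) := by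
      apply Continuous.pow
      exact continuous_finset_sum _ fun k _ => continuous_const.mul (continuous_apply k)
    have hφ2 : Measurable (fun ω => O.mulVec (φ ω)) := by
      apply measurable_pi_iff.mpr; intro k
      exact Finset.measurable_sum _ fun l _ => ((hφ.comp measurable_id).eval.const_mul (O k l))
    have hint0 : Integrable (fun ω => (φ ω k0) ^ 2) := sq_int_of_one' _ (hvar k0)
    have hintT : Integrable (fun ω => (g ⬝ᵥ O.mulVec (φ ω)) ^ 2) := by
      have h3 : (fun ω => (g ⬝ᵥ O.mulVec (φ ω)) ^ 2) = fun ω => ‖gE‖ ^ 2 * (φ ω k0) ^ 2 := by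
        funext ω; rw [hOvec]; ring
      rw [h3]; exact hint0.const_mul _
    have hintF : Integrable (fun ω => (g ⬝ᵥ φ ω) ^ 2) := by
      have h1 : Integrable (fun v : ι → ℝ => (g ⬝ᵥ v)^2)
          (Measure.map (fun ω => O.mulVec (φ ω)) (ℙ : Measure Ω)) := by
        rw [integrable_map_measure hF.aestronglyMeasurable hφ2.aemeasurable]
        exact hintT
      rw [hrot O hO] at h1
      rw [integrable_map_measure hF.aestronglyMeasurable hφ.aemeasurable] at h1
      exact h1
    refine ⟨hintF, ?_⟩
    have key : ∫ ω, (g ⬝ᵥ φ ω) ^ 2 = ∫ ω, (g ⬝ᵥ O.mulVec (φ ω)) ^ 2 := by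
      rw [← integral_map hφ.aemeasurable hF.aestronglyMeasurable,
        ← integral_map hφ2.aemeasurable hF.aestronglyMeasurable, hrot O hO]
    rw [key]
    have h4 : ∀ ω, (g ⬝ᵥ O.mulVec (φ ω)) ^ 2 = ‖gE‖ ^ 2 * (φ ω k0) ^ 2 := by
      intro ω; rw [hOvec]; ring
    simp_rw [h4]
    rw [integral_const_mul, hvar k0, mul_one]
    have h5 : ‖gE‖ ^ 2 = ∑ p, ‖gE p‖ ^ 2 := by
      rw [EuclideanSpace.norm_eq, Real.sq_sqrt (Finset.sum_nonneg fun p _ => sq_nonneg _)]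
    rw [h5]
    apply Finset.sum_congr rfl
    intro p _; simp [hgE, Real.norm_eq_abs, sq_abs]

/-- real-part coefficient vector of the quadratic form -/
private def gv {n : ℕ} (x : EuclideanSpace ℂ (Fin n)) : Fin n × Fin n × Fin 2 → ℝ :=
  fun p => if p.2.2 = (0 : Fin 2) then ((starRingEnd ℂ) (x p.1) * x p.2.1).re
    else -(((starRingEnd ℂ) (x p.1) * x p.2.1).im)

private def hv {n : ℕ} (x : EuclideanSpace ℂ (Fin n)) : Fin n × Fin n × Fin 2 → ℝ :=
  fun p => if p.2.2 = (0 : Fin 2) then ((starRingEnd ℂ) (x p.1) * x p.2.1).im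
    else ((starRingEnd ℂ) (x p.1) * x p.2.1).re

private lemma quad_eq' {n : ℕ} (M : Matrix (Fin n) (Fin n) ℂ) (x : EuclideanSpace ℂ (Fin n)) :
    quadForm M x x = ∑ j, ∑ k, ((starRingEnd ℂ) (x j) * x k) * M j k := by
  rw [quadForm, mApp, PiLp.inner_apply]
  apply Finset.sum_congr rfl
  intro j _
  rw [RCLike.inner_apply]
  have : (Matrix.toEuclideanLin M x) j = ∑ k, M j k * x k := rfl
  rw [this, Finset.sum_mul]
  apply Finset.sum_congr rfl
  intro k _; ring

private lemma quad_re' {n : ℕ} (M : Matrix (Fin n) (Fin n) ℂ) (x : EuclideanSpace ℂ (Fin n)) :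
    (quadForm M x x).re = gv x ⬝ᵥ coeffVec M := by
  rw [quad_eq', dotProduct, Fintype.sum_prod_type, Complex.re_sum]
  apply Finset.sum_congr rfl
  intro j _
  rw [Fintype.sum_prod_type, Complex.re_sum]
  apply Finset.sum_congr rfl
  intro k _
  rw [Fin.sum_univ_two]
  simp [gv, coeffVec, Complex.mul_re]
  ring

private lemma quad_im' {n : ℕ} (M : Matrix (Fin n) (Fin n) ℂ) (x : EuclideanSpace ℂ (Fin n)) :
    (quadForm M x x).im = hv x ⬝ᵥ coeffVec M := by
  rw [quad_eq', dotProduct, Fintype.sum_prod_type, Complex.im_sum]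
  apply Finset.sum_congr rfl
  intro j _
  rw [Fintype.sum_prod_type, Complex.im_sum]
  apply Finset.sum_congr rfl
  intro k _
  rw [Fin.sum_univ_two]
  simp [hv, coeffVec, Complex.mul_im]
  ring

private lemma normSq_quad' {n : ℕ} (M : Matrix (Fin n) (Fin n) ℂ)
    (x : EuclideanSpace ℂ (Fin n)) :
    Complex.normSq (quadForm M x x)
      = (gv x ⬝ᵥ coeffVec M) ^ 2 + (hv x ⬝ᵥ coeffVec M) ^ 2 := by
  rw [Complex.normSq_apply, quad_re', quad_im']; ring

private lemma sum_gv_sq {n : ℕ} (x : EuclideanSpace ℂ (Fin n)) :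
    ∑ p, gv x p ^ 2 = ‖x‖ ^ 4 := by
  have hx : ‖x‖ ^ 4 = (∑ j, Complex.normSq (x j)) ^ 2 := by
    have : ‖x‖ ^ 2 = ∑ j, Complex.normSq (x j) := by
      rw [EuclideanSpace.norm_eq, Real.sq_sqrt (Finset.sum_nonneg fun p _ => sq_nonneg _)]
      exact Finset.sum_congr rfl fun j _ => by
        simp [Complex.sq_norm]
    rw [show (4 : ℕ) = 2 * 2 from rfl, pow_mul, this]
  rw [hx, sq, Finset.sum_mul_sum, Fintype.sum_prod_type]
  apply Finset.sum_congr rfl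
  intro j _
  rw [Fintype.sum_prod_type]
  apply Finset.sum_congr rfl
  intro k _
  rw [Fin.sum_univ_two]
  simp only [gv]
  rw [← Complex.normSq_conj (x j), ← Complex.normSq_mul, Complex.normSq_apply]
  norm_num
  ring

private lemma sum_hv_sq {n : ℕ} (x : EuclideanSpace ℂ (Fin n)) :
    ∑ p, hv x p ^ 2 = ‖x‖ ^ 4 := by
  rw [← sum_gv_sq x]
  have e : ∀ f : Fin n × Fin n × Fin 2 → ℝ,
      ∑ p, f p = ∑ j, ∑ k, (f (j, k, 0) + f (j, k, 1)) := by
    intro f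
    rw [Fintype.sum_prod_type]
    apply Finset.sum_congr rfl; intro j _
    rw [Fintype.sum_prod_type]
    apply Finset.sum_congr rfl; intro k _
    rw [Fin.sum_univ_two]
  rw [e, e]
  apply Finset.sum_congr rfl; intro j _
  apply Finset.sum_congr rfl; intro k _
  simp only [gv, hv]
  norm_num
  ring

end Aux

/-- Under the rotation-invariant sub-Gaussian measurement model with `yᵢ = x* Aᵢ x`,
the norm estimator satisfies `E[(1/(2m)) Σᵢ ȳᵢ yᵢ] = ‖x‖⁴`. -/

theorem expectation_norm_estimator :
    ∀ (n m : ℕ) (Ω : Type) [MeasureSpace Ω]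
      (A : Fin m → Ω → Matrix (Fin n) (Fin n) ℂ) (x : EuclideanSpace ℂ (Fin n)),
      RotInvSubGaussian A → 0 < m →
      ∫ ω, (2 * (m : ℝ))⁻¹ * ∑ i, Complex.normSq (quadForm (A i ω) x x) = ‖x‖ ^ 4 := by
  intro n m Ω _ A x hA hm
  have hI : ∀ i : Fin m, Integrable (fun ω => Complex.normSq (quadForm (A i ω) x x)) ∧
      ∫ ω, Complex.normSq (quadForm (A i ω) x x) = 2 * ‖x‖ ^ 4 := by
    intro i
    have hg := dot_sq' (fun ω => coeffVec (A i ω)) (hA.meas i) (hA.rotInv i) (hA.unitVar i) (gv x)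
    have hh := dot_sq' (fun ω => coeffVec (A i ω)) (hA.meas i) (hA.rotInv i) (hA.unitVar i) (hv x)
    constructor
    · have h1 := hg.1.add hh.1
      have h2 : (fun ω => Complex.normSq (quadForm (A i ω) x x))
          = fun ω => (gv x ⬝ᵥ coeffVec (A i ω)) ^ 2 + (hv x ⬝ᵥ coeffVec (A i ω)) ^ 2 := by
        funext ω; exact normSq_quad' _ _
      rw [h2]; exact h1
    · have h2 : ∀ ω, Complex.normSq (quadForm (A i ω) x x)
          = (gv x ⬝ᵥ coeffVec (A i ω)) ^ 2 + (hv x ⬝ᵥ coeffVec (A i ω)) ^ 2 :=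
        fun ω => normSq_quad' _ _
      simp_rw [h2]
      rw [integral_add hg.1 hh.1, hg.2, hh.2, sum_gv_sq, sum_hv_sq]
      ring
  rw [MeasureTheory.integral_const_mul,
    MeasureTheory.integral_finset_sum Finset.univ (fun i _ => (hI i).1),
    Finset.sum_congr rfl (fun i (_ : i ∈ Finset.univ) => (hI i).2),
    Finset.sum_const, Finset.card_univ, Fintype.card_fin]
  have hm' : (m : ℝ) ≠ 0 := Nat.cast_ne_zero.mpr hm.ne'
  rw [nsmul_eq_mul]
  field_simp
end

section
/- Let f : ℂⁿ → ℝ with (Wirtinger) gradient ∇f, let x ∈ ℂⁿ, and suppose the regularity condition RC(α, β, ρ) holds: for all z with dist(z, x) ≤ ρ‖x‖₂, Re(⟨∇f(z), z − x·e^{jφ_min}⟩) ≥ (1/α)·dist²(z, x) + (1/β)·‖∇f(z)‖₂², where φ_min minimizes ‖z − x·e^{jφ}‖₂ over φ. Then for any step size η with 0 < η ≤ 2/β and any z with dist(z, x) ≤ ρ‖x‖₂, the gradient step z⁺ = z − η·∇f(z) satisfies dist²(z⁺, x) ≤ (1 − 2η/α)·dist²(z, x); consequently, iterates z⁽ᵗ⁺¹⁾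 = z⁽ᵗ⁾ − η∇f(z⁽ᵗ⁾) started from z⁽⁰⁾ with dist(z⁽⁰⁾, x) ≤ ρ‖x‖₂ satisfy dist²(z⁽ᵗ⁾, x) ≤ (1 − 2η/α)ᵗ·dist²(z⁽⁰⁾, x) for all t, provided αβ ≥ 4. -/
open MeasureTheory ProbabilityTheory Matrix Complex Finset

section Aux
variable {n : ℕ}

lemma aux_norm_sub_sq (y w : EuclideanSpace ℂ (Fin n)) :
    ‖y - w‖ ^ 2 = ‖y‖ ^ 2 - 2 * (inner ℂ y w : ℂ).re + ‖w‖ ^ 2 := by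
  have := @norm_sub_sq ℂ _ _ _ _ y w
  simpa using this

lemma aux_distSq_le (y x : EuclideanSpace ℂ (Fin n)) (c : ℂ) (hc : ‖c‖ = 1) :
    distSq y x ≤ ‖y - c • x‖ ^ 2 := by
  rw [aux_norm_sub_sq, distSq]
  have h1 : ‖c • x‖ = ‖x‖ := by
    rw [norm_smul]; simp [hc]
  have h2 : (inner ℂ y (c • x) : ℂ) = c * inner ℂ y x := inner_smul_right _ _ _
  have h3 : (inner ℂ y (c • x) : ℂ).re ≤ ‖(inner ℂ y x : ℂ)‖ := by
    calc (inner ℂ y (c • x) : ℂ).re ≤ ‖(inner ℂ y (c • x) : ℂ)‖ := Complex.re_le_norm _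
    _ = ‖(inner ℂ y x : ℂ)‖ := by rw [h2, norm_mul, hc, one_mul]
  rw [h1]
  nlinarith

lemma aux_phase_abs (θ : ℝ) : ‖Complex.exp (-(θ:ℂ) * Complex.I)‖ = 1 := by
  rw [show (-(θ:ℂ)) = ((-θ : ℝ) : ℂ) by push_cast; ring, Complex.norm_exp_ofReal_mul_I]

lemma aux_rot (w : ℂ) : Complex.exp (-(Complex.arg w) * Complex.I) * w = (‖w‖ : ℂ) := by
  have h : Complex.exp (-(Complex.arg w : ℂ) * Complex.I)
      * Complex.exp ((Complex.arg w : ℂ) * Complex.I) = 1 := by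
    rw [← Complex.exp_add, show (-(Complex.arg w : ℂ) * Complex.I
      + (Complex.arg w : ℂ) * Complex.I) = 0 by ring, Complex.exp_zero]
  calc Complex.exp (-(Complex.arg w) * Complex.I) * w
      = Complex.exp (-(Complex.arg w) * Complex.I)
        * ((‖w‖ : ℂ) * Complex.exp ((Complex.arg w : ℂ) * Complex.I)) := by
        rw [Complex.norm_mul_exp_arg_mul_I]
    _ = (‖w‖ : ℂ) * (Complex.exp (-(Complex.arg w : ℂ) * Complex.I)
        * Complex.exp ((Complex.arg w : ℂ) * Complex.I)) := by ring
    _ = (‖w‖ : ℂ) := by rw [h, mul_one]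

lemma aux_distSq_eq (z x : EuclideanSpace ℂ (Fin n)) :
    distSq z x = ‖z - Complex.exp (-(Complex.arg (inner ℂ z x : ℂ)) * Complex.I) • x‖ ^ 2 := by
  set c := Complex.exp (-(Complex.arg (inner ℂ z x : ℂ)) * Complex.I) with hc
  have habs : ‖c‖ = 1 := aux_phase_abs _
  rw [aux_norm_sub_sq, distSq]
  have h1 : ‖c • x‖ = ‖x‖ := by rw [norm_smul]; simp [habs]
  have h2 : (inner ℂ z (c • x) : ℂ) = ((‖(inner ℂ z x : ℂ)‖ : ℝ) : ℂ) := by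
    rw [inner_smul_right, hc, aux_rot]
  rw [h1, h2]
  simp
  ring

lemma aux_distSq_nonneg (z x : EuclideanSpace ℂ (Fin n)) : 0 ≤ distSq z x := by
  rw [aux_distSq_eq]; positivity

end Aux


/-- If the regularity condition `RC(α, β, ρ)` holds for a gradient map `g`, then for any
step size `0 < η ≤ 2/β` a gradient step contracts the squared distance by `(1 − 2η/α)`
inside `E(ρ)`; consequently (provided `αβ ≥ 4`) the iterates converge linearly. -/
theorem regularity_condition_implies_linear_convergence {n : ℕ}
    (g : EuclideanSpace ℂ (Fin n) → EuclideanSpace ℂ (Fin n))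
    (x : EuclideanSpace ℂ (Fin n)) (α β ρ η : ℝ)
    (hα : 0 < α) (hβ : 0 < β) (hρ : 0 < ρ)
    (hRC : ∀ z : EuclideanSpace ℂ (Fin n), distSq z x ≤ ρ ^ 2 * ‖x‖ ^ 2 →
      (inner ℂ (g z) (z - Complex.exp (-(Complex.arg (inner ℂ z x : ℂ)) * Complex.I) • x) : ℂ).re
        ≥ α⁻¹ * distSq z x + β⁻¹ * ‖g z‖ ^ 2)
    (hη : 0 < η) (hη2 : η ≤ 2 / β) :
    (∀ z : EuclideanSpace ℂ (Fin n), distSq z x ≤ ρ ^ 2 * ‖x‖ ^ 2 →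
      distSq (z - (η : ℂ) • g z) x ≤ (1 - 2 * η / α) * distSq z x) ∧
    (4 ≤ α * β →
      ∀ zseq : ℕ → EuclideanSpace ℂ (Fin n),
        (∀ t, zseq (t + 1) = zseq t - (η : ℂ) • g (zseq t)) →
        distSq (zseq 0) x ≤ ρ ^ 2 * ‖x‖ ^ 2 →
        ∀ t, distSq (zseq t) x ≤ (1 - 2 * η / α) ^ t * distSq (zseq 0) x) := by
  have main : ∀ z : EuclideanSpace ℂ (Fin n), distSq z x ≤ ρ ^ 2 * ‖x‖ ^ 2 →
      distSq (z - (η : ℂ) • g z) x ≤ (1 - 2 * η / α) * distSq z x := by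
    intro z hz
    set c := Complex.exp (-(Complex.arg (inner ℂ z x : ℂ)) * Complex.I) with hc
    have habs : ‖c‖ = 1 := aux_phase_abs _
    have hle : distSq (z - (η : ℂ) • g z) x ≤ ‖(z - (η : ℂ) • g z) - c • x‖ ^ 2 :=
      aux_distSq_le _ _ _ habs
    have hre : (inner ℂ (g z) (z - c • x) : ℂ).re
        ≥ α⁻¹ * distSq z x + β⁻¹ * ‖g z‖ ^ 2 := hRC z hz
    have hrw : (z - (η : ℂ) • g z) - c • x = (z - c • x) - (η : ℂ) • g z := by
      abel
    have hexp : ‖(z - c • x) - (η : ℂ) • g z‖ ^ 2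
        = ‖z - c • x‖ ^ 2 - 2 * η * (inner ℂ (g z) (z - c • x) : ℂ).re
          + η ^ 2 * ‖g z‖ ^ 2 := by
      rw [aux_norm_sub_sq]
      have h1 : (inner ℂ (z - c • x) ((η : ℂ) • g z) : ℂ).re
          = η * (inner ℂ (g z) (z - c • x) : ℂ).re := by
        rw [inner_smul_right]
        rw [Complex.mul_re]
        simp only [Complex.ofReal_re, Complex.ofReal_im, zero_mul, sub_zero]
        congr 1
        exact @inner_re_symm ℂ _ _ _ _ (z - c • x) (g z)
      have h2 : ‖(η : ℂ) • g z‖ ^ 2 = η ^ 2 * ‖g z‖ ^ 2 := by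
        rw [norm_smul]
        simp [abs_of_pos hη]
        ring
      rw [h1, h2]; ring
    have hdz : ‖z - c • x‖ ^ 2 = distSq z x := (aux_distSq_eq z x).symm
    have hgn : 0 ≤ ‖g z‖ ^ 2 := by positivity
    have hstep : η ^ 2 - 2 * η * β⁻¹ ≤ 0 := by
      have : η ≤ 2 * β⁻¹ := by rw [div_eq_mul_inv] at hη2; linarith
      nlinarith
    calc distSq (z - (η : ℂ) • g z) x ≤ ‖(z - c • x) - (η : ℂ) • g z‖ ^ 2 := by
          rw [← hrw]; exact hle
      _ = distSq z x - 2 * η * (inner ℂ (g z) (z - c • x) : ℂ).re + η ^ 2 * ‖g z‖ ^ 2 := by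
          rw [hexp, hdz]
      _ ≤ distSq z x - 2 * η * (α⁻¹ * distSq z x + β⁻¹ * ‖g z‖ ^ 2) + η ^ 2 * ‖g z‖ ^ 2 := by
          nlinarith
      _ = (1 - 2 * η / α) * distSq z x + (η ^ 2 - 2 * η * β⁻¹) * ‖g z‖ ^ 2 := by
          field_simp; ring
      _ ≤ (1 - 2 * η / α) * distSq z x := by nlinarith
  refine ⟨main, fun hαβ zseq hrec h0 t => ?_⟩
  have hr0 : 0 ≤ 1 - 2 * η / α := by
    have hβ' : η * β ≤ 2 := by
      rw [div_eq_mul_inv] at hη2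
      calc η * β ≤ (2 * β⁻¹) * β := by nlinarith
        _ = 2 := by field_simp
    have : 2 * η ≤ α := by nlinarith
    have : 2 * η / α ≤ 1 := by
      rw [div_le_one hα]; linarith
    linarith
  have hr1 : 1 - 2 * η / α ≤ 1 := by
    have : 0 < 2 * η / α := by positivity
    linarith
  induction t with
  | zero => simp
  | succ t ih =>
    have hin : distSq (zseq t) x ≤ ρ ^ 2 * ‖x‖ ^ 2 := by
      calc distSq (zseq t) x ≤ (1 - 2 * η / α) ^ t * distSq (zseq 0) x := ih
        _ ≤ 1 * distSq (zseq 0) x := by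
            have := pow_le_one₀ hr0 hr1 (n := t)
            nlinarith [aux_distSq_nonneg (zseq 0) x]
        _ ≤ ρ ^ 2 * ‖x‖ ^ 2 := by linarith
    calc distSq (zseq (t + 1)) x = distSq (zseq t - (η : ℂ) • g (zseq t)) x := by rw [hrec]
      _ ≤ (1 - 2 * η / α) * distSq (zseq t) x := main _ hin
      _ ≤ (1 - 2 * η / α) * ((1 - 2 * η / α) ^ t * distSq (zseq 0) x) := by nlinarith
      _ = (1 - 2 * η / α) ^ (t + 1) * distSq (zseq 0) x := by ring
end

section
/- Fix ν > 0 and matrices A₁, …, A_m ∈ ℂ^{n×n} such that ‖(1/m)·Σ_{i=1}^m (p* Aᵢ* q)·Aᵢ − 2 q p*‖ < ν for all unit vectors p, q ∈ ℂⁿ. Then for all h, x ∈ ℂⁿ with h* x real, the bound (1/m)·Σ_{i=1}^m Re(h* Aᵢ* x · h* Aᵢ x) ≥ 2·(h* x)² − ν·‖h‖₂²·‖x‖₂² holds. -/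
open MeasureTheory ProbabilityTheory Matrix Complex Finset

noncomputable section

lemma quadForm_smul_mat {n : ℕ} (c : ℂ) (M : Matrix (Fin n) (Fin n) ℂ)
    (u v : EuclideanSpace ℂ (Fin n)) : quadForm (c • M) u v = c * quadForm M u v := by
  simp [quadForm, mApp, _root_.map_smul, inner_smul_right]

lemma quadForm_sub {n : ℕ} (M N : Matrix (Fin n) (Fin n) ℂ)
    (u v : EuclideanSpace ℂ (Fin n)) : quadForm (M - N) u v = quadForm M u v - quadForm N u v := by
  simp [quadForm, mApp, map_sub, inner_sub_right]

lemma quadForm_sum {n m : ℕ} (M : Fin m → Matrix (Fin n) (Fin n) ℂ)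
    (u v : EuclideanSpace ℂ (Fin n)) :
    quadForm (∑ i, M i) u v = ∑ i, quadForm (M i) u v := by
  simp [quadForm, mApp, map_sum, LinearMap.sum_apply, inner_sum]

lemma quadForm_smul_left {n : ℕ} (c : ℂ) (M : Matrix (Fin n) (Fin n) ℂ)
    (u v : EuclideanSpace ℂ (Fin n)) :
    quadForm M (c • u) v = starRingEnd ℂ c * quadForm M u v := by
  simp [quadForm, inner_smul_left, mul_comm]

lemma quadForm_smul_right {n : ℕ} (c : ℂ) (M : Matrix (Fin n) (Fin n) ℂ)
    (u v : EuclideanSpace ℂ (Fin n)) :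
    quadForm M u (c • v) = c * quadForm M u v := by
  simp [quadForm, mApp, _root_.map_smul, inner_smul_right]

lemma quadForm_outer {n : ℕ} (q p u v : EuclideanSpace ℂ (Fin n)) :
    quadForm (outer q p) u v = (inner ℂ p v : ℂ) * (inner ℂ u q : ℂ) := by
  simp only [quadForm, mApp, outer, Matrix.toEuclideanLin_apply, PiLp.inner_apply,
    RCLike.inner_apply]
  simp only [Matrix.mulVec, Matrix.vecMulVec_apply, dotProduct]
  simp only [Finset.mul_sum]
  congr 1; ext i
  rw [Finset.sum_mul, Finset.sum_mul]
  congr 1; ext j; ring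

lemma quadForm_norm_le {n : ℕ} (M : Matrix (Fin n) (Fin n) ℂ)
    (u v : EuclideanSpace ℂ (Fin n)) :
    ‖quadForm M u v‖ ≤ specNorm M * ‖u‖ * ‖v‖ := by
  calc ‖quadForm M u v‖ ≤ ‖u‖ * ‖mApp M v‖ := norm_inner_le_norm u _
    _ ≤ ‖u‖ * (specNorm M * ‖v‖) := by
        gcongr
        exact (LinearMap.toContinuousLinearMap (Matrix.toEuclideanLin M)).le_opNorm v
    _ = specNorm M * ‖u‖ * ‖v‖ := by ring

end

/-- Lower bound on `(1/m) Σᵢ Re(h* Aᵢ* x · h* Aᵢ x)` under the uniform spectral-norm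
concentration hypothesis, for `h* x` real. -/
theorem second_term_lower_bound {n m : ℕ} (ν : ℝ) (hν : 0 < ν)
    (A : Fin m → Matrix (Fin n) (Fin n) ℂ)
    (hA : ∀ p q : EuclideanSpace ℂ (Fin n), ‖p‖ = 1 → ‖q‖ = 1 →
      specNorm (Gmat A p q) < ν)
    (h x : EuclideanSpace ℂ (Fin n)) (hreal : (inner ℂ h x : ℂ).im = 0) :
    (m : ℝ)⁻¹ * ∑ i, (quadForm (A i)ᴴ h x * quadForm (A i) h x).re
      ≥ 2 * (inner ℂ h x : ℂ).re ^ 2 - ν * ‖h‖ ^ 2 * ‖x‖ ^ 2 := by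
  by_cases hh : h = 0
  · simp [hh, quadForm, inner_zero_left, ge_iff_le, hν.le]
  by_cases hx : x = 0
  · simp [hx, quadForm, mApp, inner_zero_right, ge_iff_le, hν.le]
  have hhn : (0:ℝ) < ‖h‖ := norm_pos_iff.mpr hh
  have hxn : (0:ℝ) < ‖x‖ := norm_pos_iff.mpr hx
  set c : ℂ := ((‖h‖ : ℝ) : ℂ)⁻¹ with hc
  set d : ℂ := ((‖x‖ : ℝ) : ℂ)⁻¹ with hd
  have hcr : starRingEnd ℂ c = c := by rw [hc]; simp [← Complex.ofReal_inv]
  have hdr : starRingEnd ℂ d = d := by rw [hd]; simp [← Complex.ofReal_inv]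
  have hp1 : ‖c • h‖ = 1 := by
    rw [norm_smul, hc]
    simp [Complex.norm_real, abs_of_pos hhn, inv_mul_cancel₀ hhn.ne']
  have hq1 : ‖d • x‖ = 1 := by
    rw [norm_smul, hd]
    simp [Complex.norm_real, abs_of_pos hxn, inv_mul_cancel₀ hxn.ne']
  set T : ℂ := (inner ℂ h x : ℂ) with hT
  set S : ℂ := (m:ℂ)⁻¹ * ∑ i, quadForm (A i)ᴴ h x * quadForm (A i) h x with hS
  have hkey : quadForm (Gmat A (c • h) (d • x)) h x = c * d * (S - 2 * T ^ 2) := by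
    unfold Gmat
    rw [quadForm_sub, quadForm_smul_mat, quadForm_sum, quadForm_smul_mat, quadForm_outer]
    simp only [quadForm_smul_left, quadForm_smul_right, inner_smul_left, inner_smul_right,
      hcr, hdr, ← hT]
    simp only [quadForm_smul_mat]
    have hsum : ∑ i, d * (c * quadForm (A i)ᴴ h x) * quadForm (A i) h x
        = c * d * ∑ i, quadForm (A i)ᴴ h x * quadForm (A i) h x := by
      rw [Finset.mul_sum]
      exact Finset.sum_congr rfl fun i _ => by ring
    rw [hsum, hS]
    ring
  have hspec := hA (c • h) (d • x) hp1 hq1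
  have hb1 : ‖quadForm (Gmat A (c • h) (d • x)) h x‖
      ≤ specNorm (Gmat A (c • h) (d • x)) * ‖h‖ * ‖x‖ := quadForm_norm_le _ _ _
  have hnorm : ‖c * d * (S - 2 * T ^ 2)‖ = ‖h‖⁻¹ * ‖x‖⁻¹ * ‖S - 2 * T ^ 2‖ := by
    rw [norm_mul, norm_mul, hc, hd]
    simp [Complex.norm_real, abs_of_pos hhn, abs_of_pos hxn]
  have hb2 : ‖S - 2 * T ^ 2‖ ≤ ν * ‖h‖ ^ 2 * ‖x‖ ^ 2 := by
    have h2 : ‖h‖⁻¹ * ‖x‖⁻¹ * ‖S - 2 * T ^ 2‖ ≤ ν * ‖h‖ * ‖x‖ := by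
      rw [← hnorm, ← hkey]
      refine hb1.trans ?_
      have := hspec.le
      gcongr
    have h3 : ‖S - 2 * T ^ 2‖
        = (‖h‖ * ‖x‖) * (‖h‖⁻¹ * ‖x‖⁻¹ * ‖S - 2 * T ^ 2‖) := by
      field_simp
    rw [h3]
    calc (‖h‖ * ‖x‖) * (‖h‖⁻¹ * ‖x‖⁻¹ * ‖S - 2 * T ^ 2‖)
        ≤ (‖h‖ * ‖x‖) * (ν * ‖h‖ * ‖x‖) := by
          exact mul_le_mul_of_nonneg_left h2 (by positivity)
      _ = ν * ‖h‖ ^ 2 * ‖x‖ ^ 2 := by ring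
  have hRe : -(ν * ‖h‖ ^ 2 * ‖x‖ ^ 2) ≤ (S - 2 * T ^ 2).re := by
    have h4 : |(S - 2 * T ^ 2).re| ≤ ‖S - 2 * T ^ 2‖ :=
      Complex.abs_re_le_norm _
    have := abs_le.mp (h4.trans hb2)
    linarith [this.1]
  have hT2 : (2 * T ^ 2).re = 2 * T.re ^ 2 := by
    have : T.im = 0 := hreal
    simp [pow_two, Complex.mul_re, this]
  have hSre : S.re = (m : ℝ)⁻¹ * ∑ i, (quadForm (A i)ᴴ h x * quadForm (A i) h x).re := by
    rw [hS]
    have hm : ((m:ℕ):ℂ)⁻¹ = (((m:ℝ)⁻¹ : ℝ) : ℂ) := by push_cast; ring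
    rw [hm, Complex.re_ofReal_mul, Complex.re_sum]
  have hsplit : S.re = (2 * T ^ 2).re + (S - 2 * T ^ 2).re := by
    rw [← Complex.add_re]; ring_nf
  rw [ge_iff_le, ← hSre, hsplit, hT2]
  linarith
end

section
/- Let x ∈ ℂⁿ be nonzero, δ ∈ (0, 1), and let S ∈ ℂ^{n×n} satisfy ‖S − 2·x x*‖ ≤ δ·‖x‖₂². Let τ₀ be the largest singular value of S with associated unit left and right singular vectors u₀, v₀. Then τ₀ ≥ (2 − δ)·‖x‖₂², 2·|x* v₀|·‖x‖₂ ≥ (2 − 2δ)·‖x‖₂², and dist²(‖x‖₂·v₀, x) ≤ 2δ·‖x‖₂². -/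
open MeasureTheory ProbabilityTheory Matrix Complex Finset

private lemma norm_mApp_le {n : ℕ} (M : Matrix (Fin n) (Fin n) ℂ)
    (v : EuclideanSpace ℂ (Fin n)) : ‖mApp M v‖ ≤ specNorm M * ‖v‖ :=
  (LinearMap.toContinuousLinearMap (Matrix.toEuclideanLin M)).le_opNorm v

private lemma mApp_le_specNorm {n : ℕ} (M : Matrix (Fin n) (Fin n) ℂ)
    (v : EuclideanSpace ℂ (Fin n)) (hv : ‖v‖ = 1) : ‖mApp M v‖ ≤ specNorm M := by
  have := norm_mApp_le M v
  rwa [hv, mul_one] at this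

private lemma mApp_outer {n : ℕ} (p q v : EuclideanSpace ℂ (Fin n)) :
    mApp (outer q p) v = (inner ℂ p v : ℂ) • q := by
  ext i
  simp [mApp, outer, Matrix.toEuclideanLin_apply, Matrix.mulVec, Matrix.vecMulVec, dotProduct,
    inner, Finset.mul_sum, mul_comm, mul_left_comm]

private lemma mApp_S_eq {n : ℕ} (S : Matrix (Fin n) (Fin n) ℂ) (x w : EuclideanSpace ℂ (Fin n)) :
    mApp S w = mApp (S - (2 : ℂ) • outer x x) w + ((2 : ℂ) * (inner ℂ x w : ℂ)) • x := by
  have h : mApp (S - (2 : ℂ) • outer x x) w = mApp S w - (2 : ℂ) • mApp (outer x x) w := by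
    simp [mApp]
  rw [h, mApp_outer]
  simp [smul_smul]

/-- If `‖S − 2 x x*‖ ≤ δ ‖x‖²` with `δ ∈ (0,1)` and `x ≠ 0`, then the largest singular
value `τ₀ = ‖S‖` of `S` satisfies `τ₀ ≥ (2 − δ)‖x‖²`, the top right singular vector `v₀`
satisfies `2 |x* v₀| ‖x‖ ≥ (2 − 2δ)‖x‖²`, and `dist²(‖x‖ v₀, x) ≤ 2δ‖x‖²`. -/
theorem top_singular_vector_close {n : ℕ} (x : EuclideanSpace ℂ (Fin n)) (hx : x ≠ 0)
    (δ : ℝ) (hδ : δ ∈ Set.Ioo (0 : ℝ) 1) (S : Matrix (Fin n) (Fin n) ℂ)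
    (hS : specNorm (S - (2 : ℂ) • outer x x) ≤ δ * ‖x‖ ^ 2)
    (v₀ : EuclideanSpace ℂ (Fin n)) (hv : TopRightSingVec S v₀) :
    (2 - δ) * ‖x‖ ^ 2 ≤ specNorm S ∧
    (2 - 2 * δ) * ‖x‖ ^ 2 ≤ 2 * ‖(inner ℂ x v₀ : ℂ)‖ * ‖x‖ ∧
    distSq ((‖x‖ : ℂ) • v₀) x ≤ 2 * δ * ‖x‖ ^ 2 := by
  obtain ⟨hδ0, hδ1⟩ := hδ
  obtain ⟨hv1, u₀, hu1, hSv, hSHu⟩ := hv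
  have hc0 : 0 < ‖x‖ := norm_pos_iff.mpr hx
  set c := ‖x‖ with hc
  have hcne : (c : ℂ) ≠ 0 := Complex.ofReal_ne_zero.mpr (ne_of_gt hc0)
  set E := S - (2 : ℂ) • outer x x with hE
  have hEb : ∀ w : EuclideanSpace ℂ (Fin n), ‖w‖ = 1 → ‖mApp E w‖ ≤ δ * c ^ 2 :=
    fun w hw => le_trans (mApp_le_specNorm E w hw) hS
  -- Part 1
  have h1 : (2 - δ) * c ^ 2 ≤ specNorm S := by
    set w : EuclideanSpace ℂ (Fin n) := ((c⁻¹ : ℝ) : ℂ) • x with hw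
    have hwn : ‖w‖ = 1 := by
      rw [hw, norm_smul, Complex.norm_real, Real.norm_eq_abs, abs_of_pos (inv_pos.mpr hc0)]
      field_simp
      exact hc.symm
    have hxw : (inner ℂ x w : ℂ) = (c : ℂ) := by
      rw [hw, inner_smul_right, inner_self_eq_norm_sq_to_K]
      push_cast
      show ((c : ℂ))⁻¹ * (c : ℂ) ^ 2 = (c : ℂ)
      field_simp
    have hSwe : mApp S w = mApp E w + ((2 : ℂ) * (c : ℂ)) • x := by
      rw [mApp_S_eq S x w, hxw, hE]
    have hnorm2 : ‖((2 : ℂ) * (c : ℂ)) • x‖ = 2 * c ^ 2 := by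
      have h2c : ‖(2 : ℂ) * (c : ℂ)‖ = 2 * c := by
        rw [norm_mul, Complex.norm_real, Real.norm_eq_abs, abs_of_pos hc0]
        norm_num
      rw [norm_smul, h2c, ← hc]
      ring
    have hlow : 2 * c ^ 2 ≤ ‖mApp S w‖ + δ * c ^ 2 := by
      have h := norm_sub_le (mApp S w) (mApp E w)
      have heq : mApp S w - mApp E w = ((2 : ℂ) * (c : ℂ)) • x := by
        rw [hSwe]; abel
      rw [heq, hnorm2] at h
      have hE1 := hEb w hwn
      linarith
    have hup : ‖mApp S w‖ ≤ specNorm S := mApp_le_specNorm S w hwn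
    linarith
  -- key inequality for parts 2 and 3
  have hτ : (specNorm S : ℂ) = inner ℂ u₀ (mApp S v₀) := by
    rw [hSv, inner_smul_right, inner_self_eq_norm_sq_to_K, hu1]
    norm_num
  have hτpos : 0 < specNorm S := lt_of_lt_of_le (by nlinarith) h1
  have hdecomp : (inner ℂ u₀ (mApp S v₀) : ℂ)
      = inner ℂ u₀ (mApp E v₀) + ((2 : ℂ) * (inner ℂ x v₀ : ℂ)) * (inner ℂ u₀ x : ℂ) := by
    rw [mApp_S_eq S x v₀, inner_add_right, inner_smul_right, hE]
  have habs1 : ‖(inner ℂ u₀ (mApp E v₀) : ℂ)‖ ≤ δ * c ^ 2 := by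
    calc ‖(inner ℂ u₀ (mApp E v₀) : ℂ)‖ = ‖(inner ℂ u₀ (mApp E v₀) : ℂ)‖ :=
          rfl
      _ ≤ ‖u₀‖ * ‖mApp E v₀‖ := norm_inner_le_norm u₀ (mApp E v₀)
      _ ≤ δ * c ^ 2 := by rw [hu1, one_mul]; exact hEb v₀ hv1
  have habs2 : ‖(inner ℂ u₀ x : ℂ)‖ ≤ c := by
    have := norm_inner_le_norm (𝕜 := ℂ) u₀ x
    rwa [hu1, one_mul] at this
  have hτle : specNorm S ≤ δ * c ^ 2 + 2 * ‖(inner ℂ x v₀ : ℂ)‖ * c := by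
    have h0 : specNorm S = ‖((specNorm S : ℂ))‖ := by
      rw [Complex.norm_real, Real.norm_eq_abs, abs_of_pos hτpos]
    rw [h0, hτ, hdecomp]
    calc ‖(inner ℂ u₀ (mApp E v₀) + ((2 : ℂ) * (inner ℂ x v₀ : ℂ)) * (inner ℂ u₀ x : ℂ))‖
        ≤ ‖(inner ℂ u₀ (mApp E v₀) : ℂ)‖
          + ‖(((2 : ℂ) * (inner ℂ x v₀ : ℂ)) * (inner ℂ u₀ x : ℂ))‖ :=
          norm_add_le _ _
      _ ≤ δ * c ^ 2 + 2 * ‖(inner ℂ x v₀ : ℂ)‖ * c := by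
          rw [norm_mul, norm_mul, Complex.norm_two]
          have h2 : ‖(inner ℂ x v₀ : ℂ)‖ * ‖(inner ℂ u₀ x : ℂ)‖
              ≤ ‖(inner ℂ x v₀ : ℂ)‖ * c :=
            mul_le_mul_of_nonneg_left habs2 (norm_nonneg _)
          nlinarith
  have h2 : (2 - 2 * δ) * c ^ 2 ≤ 2 * ‖(inner ℂ x v₀ : ℂ)‖ * c := by nlinarith
  refine ⟨h1, h2, ?_⟩
  -- Part 3
  have hnormcv : ‖((c : ℝ) : ℂ) • v₀‖ = c := by
    rw [norm_smul, Complex.norm_real, Real.norm_eq_abs, abs_of_pos hc0, hv1, mul_one]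
  have hinner : ‖(inner ℂ (((c : ℝ) : ℂ) • v₀) x : ℂ)‖
      = c * ‖(inner ℂ x v₀ : ℂ)‖ := by
    rw [inner_smul_left, norm_mul, Complex.norm_conj, Complex.norm_real, Real.norm_eq_abs,
      abs_of_pos hc0, ← inner_conj_symm x v₀, Complex.norm_conj]
  rw [distSq, hnormcv, hinner]
  nlinarith
end
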